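/- Every element of the algebraic Toeplitz algebra $\mathcal T$ (finite matrices plus Toeplitz matrices of Laurent polynomials, over a unital ring $R$) can be written uniquely as a finite sum $\sum_{n,m\in\mathbb N} c_{n,m}\,\mathsf W(z)^n\,\mathsf W(z^{-1})^m$ with $c_{n,m}\in R$ and only finitely many $c_{n,m}$ nonzero; here $\mathsf W(z)$ is the unilateral forward shift and $\mathsf W(z^{-1})$ its transpose, satisfying the bicyclic relation $\mathsf W(z^{-1})\mathsf W(z)=1$. -/
import Mathlib

open Function

private lemma finsum_ind {R : Type*} [Ring R] (c : ℕ × ℕ → R) (i j : ℕ) :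
    (∑ᶠ nm : ℕ × ℕ, c nm *
      (if nm.1 ≤ i ∧ nm.2 ≤ j ∧ (i : ℤ) - nm.1 = (j : ℤ) - nm.2 then 1 else 0))
      = ∑ k ∈ Finset.range (min i j + 1), c (i - k, j - k) := by
  have hinj : ∀ k ∈ Finset.range (min i j + 1), ∀ l ∈ Finset.range (min i j + 1),
      (fun k => ((i - k, j - k) : ℕ × ℕ)) k = (fun k => ((i - k, j - k) : ℕ × ℕ)) l → k = l := by
    intro k hk l hl h
    simp only [Finset.mem_range] at hk hl
    have h1 : i - k = i - l := congrArg Prod.fst h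
    omega
  rw [finsum_eq_sum_of_support_subset _
    (s := (Finset.range (min i j + 1)).image (fun k => (i - k, j - k)))
    ?_, Finset.sum_image hinj]
  · refine Finset.sum_congr rfl fun k hk => ?_
    simp only [Finset.mem_range] at hk
    have h1 : (i - k : ℕ) ≤ i := Nat.sub_le _ _
    have h2 : (j - k : ℕ) ≤ j := Nat.sub_le _ _
    have h3 : ((i - k : ℕ) : ℤ) = (i : ℤ) - k := by omega
    have h4 : ((j - k : ℕ) : ℤ) = (j : ℤ) - k := by omega
    rw [if_pos ⟨h1, h2, by omega⟩, mul_one]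
  · intro nm hnm
    simp only [mem_support] at hnm
    by_cases hcond : nm.1 ≤ i ∧ nm.2 ≤ j ∧ (i : ℤ) - nm.1 = (j : ℤ) - nm.2
    · obtain ⟨h1, h2, h3⟩ := hcond
      simp only [Finset.coe_image, Set.mem_image, Finset.mem_coe, Finset.mem_range]
      refine ⟨i - nm.1, by omega, ?_⟩
      have h5 : i - (i - nm.1) = nm.1 := by omega
      have h6 : j - (i - nm.1) = nm.2 := by omega
      rw [h5, h6]
    · rw [if_neg hcond, mul_zero] at hnm; exact absurd rfl hnm

private lemma Tstep {R : Type*} [Ring R] (c : ℕ × ℕ → R) (i j : ℕ) :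
    (∑ k ∈ Finset.range (min (i + 1) (j + 1) + 1), c (i + 1 - k, j + 1 - k))
      = (∑ k ∈ Finset.range (min i j + 1), c (i - k, j - k)) + c (i + 1, j + 1) := by
  have hmin : min (i + 1) (j + 1) + 1 = (min i j + 1) + 1 := by omega
  rw [hmin, Finset.sum_range_succ']
  congr 1
  refine Finset.sum_congr rfl fun k hk => ?_
  have h1 : i + 1 - (k + 1) = i - k := by omega
  have h2 : j + 1 - (k + 1) = j - k := by omega
  rw [h1, h2]

theorem toeplitz_bicyclic_basis {R : Type*} [Ring R] (M : ℕ → ℕ → R)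
    (hM : ∃ a : ℤ → R, (support a).Finite ∧
      Set.Finite (support fun x : ℕ × ℕ => M x.1 x.2 - a ((x.1 : ℤ) - x.2))) :
    ∃! c : ℕ × ℕ → R,
      (support c).Finite ∧
      ∀ i j : ℕ, M i j =
        ∑ᶠ nm : ℕ × ℕ, c nm *
          (if nm.1 ≤ i ∧ nm.2 ≤ j ∧ (i : ℤ) - nm.1 = (j : ℤ) - nm.2
            then 1 else 0) := by
  obtain ⟨a, ha, he⟩ := hM
  set e : ℕ × ℕ → R := fun x : ℕ × ℕ => M x.1 x.2 - a ((x.1 : ℤ) - x.2) with he_def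
  set c : ℕ × ℕ → R := fun nm =>
    M nm.1 nm.2 - if 0 < nm.1 ∧ 0 < nm.2 then M (nm.1 - 1) (nm.2 - 1) else 0 with hc_def
  have hT : ∀ i j : ℕ, M i j = ∑ k ∈ Finset.range (min i j + 1), c (i - k, j - k) := by
    intro i
    induction i with
    | zero => intro j; simp [hc_def]
    | succ i ih =>
      intro j
      cases j with
      | zero => simp [hc_def]
      | succ j =>
        rw [Tstep, ← ih j, hc_def]
        simp only
        rw [if_pos ⟨Nat.succ_pos _, Nat.succ_pos _⟩]
        simp
  refine ⟨c, ⟨?_, ?_⟩, ?_⟩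
  · -- finite support
    have hsub : support c ⊆ (support e) ∪ ((fun x : ℕ × ℕ => (x.1 + 1, x.2 + 1)) '' support e)
        ∪ ((fun d : ℤ => ((d.toNat, 0) : ℕ × ℕ)) '' support a)
        ∪ ((fun d : ℤ => ((0, (-d).toNat) : ℕ × ℕ)) '' support a) := by
      rintro ⟨n, m⟩ hnm
      simp only [mem_support, hc_def] at hnm
      by_cases h : 0 < n ∧ 0 < m
      · rw [if_pos h] at hnm
        have hd : ((n - 1 : ℕ) : ℤ) - ((m - 1 : ℕ) : ℤ) = (n : ℤ) - m := by omega
        have key : e (n, m) - e (n - 1, m - 1) ≠ 0 := by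
          have heq : e (n, m) - e (n - 1, m - 1) = M n m - M (n - 1) (m - 1) := by
            simp only [he_def, hd]
            abel
          rw [heq]; exact hnm
        by_cases h1 : e (n, m) = 0
        · have h2 : e (n - 1, m - 1) ≠ 0 := by
            intro h2; rw [h1, h2, sub_zero] at key; exact key rfl
          exact Or.inl (Or.inl (Or.inr ⟨(n - 1, m - 1), h2, by
            simp only [Prod.mk.injEq]; omega⟩))
        · exact Or.inl (Or.inl (Or.inl h1))
      · rw [if_neg h, sub_zero] at hnm
        by_cases h1 : e (n, m) = 0
        · have h2 : a ((n : ℤ) - m) ≠ 0 := by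
            intro h2
            apply hnm
            have h3 := sub_eq_zero.mp h1
            simp only at h3
            rw [h3, h2]
          rcases Nat.eq_zero_or_pos n with hn | hn
          · refine Or.inr ⟨(n : ℤ) - m, h2, ?_⟩
            simp only [Prod.mk.injEq]
            constructor <;> omega
          · have hm : m = 0 := by omega
            refine Or.inl (Or.inr ⟨(n : ℤ) - m, h2, ?_⟩)
            simp only [Prod.mk.injEq]
            constructor <;> omega
        · exact Or.inl (Or.inl (Or.inl h1))
    exact Set.Finite.subset (((he.union (he.image _)).union (ha.image _)).union (ha.image _)) hsub
  · intro i j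
    rw [finsum_ind, ← hT]
  · -- uniqueness
    rintro c' ⟨-, hc'⟩
    funext nm
    obtain ⟨n, m⟩ := nm
    have key : ∀ i j : ℕ, M i j = ∑ k ∈ Finset.range (min i j + 1), c' (i - k, j - k) := by
      intro i j; rw [hc' i j, finsum_ind]
    simp only [hc_def]
    rcases Nat.eq_zero_or_pos n with hn | hn
    · subst hn
      have h0 := key 0 m
      simp at h0
      simp [← h0]
    · rcases Nat.eq_zero_or_pos m with hm | hm
      · subst hm
        have h0 := key n 0
        simp at h0
        simp [← h0, Nat.pos_iff_ne_zero.mp hn]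
      · rw [if_pos ⟨hn, hm⟩]
        obtain ⟨n', rfl⟩ : ∃ n', n = n' + 1 := ⟨n - 1, by omega⟩
        obtain ⟨m', rfl⟩ : ∃ m', m = m' + 1 := ⟨m - 1, by omega⟩
        simp only [Nat.add_sub_cancel]
        rw [key (n' + 1) (m' + 1), key n' m', Tstep]
        exact (add_sub_cancel_left _ _).symm
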